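/- The Choi–Lam form Q₁(x,y,z,w) = x²y² + x²z² + y²z² + w⁴ − 4wxyz is nonnegative on ℝ⁴ but is not a sum of squares of real polynomials. -/

import Mathlib

open MvPolynomial

/-- The Choi–Lam form `Q₁(x,y,z,w) = x²y² + x²z² + y²z² + w⁴ − 4wxyz`. -/
noncomputable def ChoiLamQ1 : MvPolynomial (Fin 4) ℝ :=
  X 0 ^ 2 * X 1 ^ 2 + X 0 ^ 2 * X 2 ^ 2 + X 1 ^ 2 * X 2 ^ 2 + X 3 ^ 4
    - 4 * (X 3 * X 0 * X 1 * X 2)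

section Aux
open Finsupp

theorem CL_amgm4 (a b c d : ℝ) (hb : 0 ≤ b) (hc : 0 ≤ c) :
    4*(a*b*c*d) ≤ a^2*b^2 + a^2*c^2 + b^2*c^2 + d^4 := by
  nlinarith [sq_nonneg (a*b - a*c), sq_nonneg (b*c - d^2),
    mul_nonneg (mul_nonneg hb hc) (sq_nonneg (a - d))]

theorem CL_key (x y z w : ℝ) : 0 ≤ x^2*y^2 + x^2*z^2 + y^2*z^2 + w^4 - 4*(w*x*y*z) := by
  have h := CL_amgm4 |x| |y| |z| |w| (abs_nonneg y) (abs_nonneg z)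
  have h2 : w*x*y*z ≤ (|x|) * |y| * |z| * |w| := by
    calc w*x*y*z ≤ |w*x*y*z| := le_abs_self _
    _ = (|x|) * |y| * |z| * |w| := by rw [abs_mul, abs_mul, abs_mul]; ring
  have h3 : (|w|)^4 = w^4 := by rw [← abs_pow]; exact abs_of_nonneg (by positivity)
  simp only [sq_abs, h3] at h
  nlinarith [h, h2]

theorem CL_sum_sq_zero {k : ℕ} (f : Fin k → ℝ) (h : ∑ i, f i ^ 2 = 0) : ∀ i, f i = 0 := by
  intro i
  have := (Finset.sum_eq_zero_iff_of_nonneg (fun j _ => sq_nonneg (f j))).mp h i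
    (Finset.mem_univ i)
  exact sq_eq_zero_iff.mp this

/-- the line substitution homomorphism -/
noncomputable def CL_lineMap (c : Fin 4 → ℝ) : MvPolynomial (Fin 4) ℝ →+* Polynomial ℝ :=
  eval₂Hom Polynomial.C (fun j => Polynomial.C (c j) * Polynomial.X)

theorem CL_lineMap_coeff (c : Fin 4 → ℝ) (g : MvPolynomial (Fin 4) ℝ) (d : ℕ) :
    (CL_lineMap c g).coeff d = eval c (homogeneousComponent d g) := by
  induction g using MvPolynomial.induction_on' with
  | add p q hp hq => simp [map_add, hp, hq]
  | monomial u a =>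
    rw [CL_lineMap, eval₂Hom_monomial]
    have h1 : (u.prod fun n e => (Polynomial.C (c n) * Polynomial.X) ^ e)
        = Polynomial.C (u.prod fun n e => (c n) ^ e) * Polynomial.X ^ u.degree := by
      rw [Finsupp.prod, Finsupp.prod, Finsupp.degree_apply, ← Finset.prod_pow_eq_pow_sum,
        map_prod, ← Finset.prod_mul_distrib]
      exact Finset.prod_congr rfl fun j _ => by rw [mul_pow, map_pow]
    rw [h1, ← mul_assoc, ← Polynomial.C_mul, Polynomial.coeff_C_mul_X_pow]
    have h2 : homogeneousComponent d (MvPolynomial.monomial u a)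
        = if u.degree = d then MvPolynomial.monomial u a else 0 := by
      ext m
      rw [coeff_homogeneousComponent, MvPolynomial.coeff_monomial]
      by_cases hm : u = m
      · subst hm; split_ifs <;> simp_all [MvPolynomial.coeff_monomial]
      · split_ifs <;> simp [MvPolynomial.coeff_monomial, hm]
    rw [h2]
    split_ifs with h h' h'
    · rw [MvPolynomial.eval_monomial]
    · exact absurd h.symm h'
    · exact absurd h'.symm h
    · simp

theorem CL_deg4 (m : Fin 4 →₀ ℕ) : m.degree = m 0 + m 1 + m 2 + m 3 := by
  rw [Finsupp.degree_apply, Finset.sum_subset (Finset.subset_univ m.support)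
    (fun i _ hi => Finsupp.notMem_support_iff.mp hi), Fin.sum_univ_four]

theorem CL_decomp (m : Fin 4 →₀ ℕ) :
    m = single 0 (m 0) + single 1 (m 1) + single 2 (m 2) + single 3 (m 3) := by
  ext j; fin_cases j <;> simp [Finsupp.single_apply]

theorem CL_deg2_classify (m : Fin 4 →₀ ℕ) (h : m.degree = 2) :
    m = single 0 2 ∨ m = single 1 2 ∨ m = single 2 2 ∨ m = single 3 2 ∨
    m = single 0 1 + single 1 1 ∨ m = single 0 1 + single 2 1 ∨ m = single 1 1 + single 2 1 ∨
    m = single 0 1 + single 3 1 ∨ m = single 1 1 + single 3 1 ∨ m = single 2 1 + single 3 1 := by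
  rw [CL_deg4] at h
  have hd := CL_decomp m
  set a := m 0 with ha; set b := m 1 with hb; set c := m 2 with hc; set d := m 3 with hd'
  have ha2 : a ≤ 2 := by omega
  have hb2 : b ≤ 2 := by omega
  have hc2 : c ≤ 2 := by omega
  have hd2 : d ≤ 2 := by omega
  interval_cases a <;> interval_cases b <;> interval_cases c <;> interval_cases d <;>
    (try simp only [Finsupp.single_zero, zero_add, add_zero] at hd) <;> (try omega) <;> tauto

theorem CL_fs_eq_iff (m n : Fin 4 →₀ ℕ) :
    m = n ↔ (m 0 = n 0 ∧ m 1 = n 1 ∧ m 2 = n 2 ∧ m 3 = n 3) := by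
  constructor
  · rintro rfl; exact ⟨rfl, rfl, rfl, rfl⟩
  · rintro ⟨h0, h1, h2, h3⟩; ext j; fin_cases j <;> assumption

theorem CL_rep (g : MvPolynomial (Fin 4) ℝ)
    (h : ∀ m : Fin 4 →₀ ℕ, m.degree ≠ 2 → coeff m g = 0) :
    g = MvPolynomial.monomial (single 0 2) (coeff (single 0 2) g)
      + MvPolynomial.monomial (single 1 2) (coeff (single 1 2) g)
      + MvPolynomial.monomial (single 2 2) (coeff (single 2 2) g)
      + MvPolynomial.monomial (single 3 2) (coeff (single 3 2) g)
      + MvPolynomial.monomial (single 0 1 + single 1 1) (coeff (single 0 1 + single 1 1) g)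
      + MvPolynomial.monomial (single 0 1 + single 2 1) (coeff (single 0 1 + single 2 1) g)
      + MvPolynomial.monomial (single 1 1 + single 2 1) (coeff (single 1 1 + single 2 1) g)
      + MvPolynomial.monomial (single 0 1 + single 3 1) (coeff (single 0 1 + single 3 1) g)
      + MvPolynomial.monomial (single 1 1 + single 3 1) (coeff (single 1 1 + single 3 1) g)
      + MvPolynomial.monomial (single 2 1 + single 3 1) (coeff (single 2 1 + single 3 1) g) := by
  ext m
  simp only [coeff_add, coeff_monomial]
  by_cases hm : m.degree = 2
  · rcases CL_deg2_classify m hm with rfl|rfl|rfl|rfl|rfl|rfl|rfl|rfl|rfl|rfl <;>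
      simp +decide [CL_fs_eq_iff, Finsupp.add_apply, Finsupp.single_apply]
  · rw [h m hm]
    have hne : ∀ n : Fin 4 →₀ ℕ, n.degree = 2 → n ≠ m := fun n hn e => hm (e ▸ hn)
    rw [if_neg (hne _ (by rw [CL_deg4]; simp [Finsupp.single_apply])),
        if_neg (hne _ (by rw [CL_deg4]; simp [Finsupp.single_apply])),
        if_neg (hne _ (by rw [CL_deg4]; simp [Finsupp.single_apply])),
        if_neg (hne _ (by rw [CL_deg4]; simp [Finsupp.single_apply])),
        if_neg (hne _ (by rw [CL_deg4]; simp [Finsupp.single_apply])),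
        if_neg (hne _ (by rw [CL_deg4]; simp [Finsupp.single_apply])),
        if_neg (hne _ (by rw [CL_deg4]; simp [Finsupp.single_apply])),
        if_neg (hne _ (by rw [CL_deg4]; simp [Finsupp.single_apply])),
        if_neg (hne _ (by rw [CL_deg4]; simp [Finsupp.single_apply])),
        if_neg (hne _ (by rw [CL_deg4]; simp [Finsupp.single_apply]))]
    norm_num

theorem CL_sq_coeff_top (p : Polynomial ℝ) (D : ℕ) (hp : p.natDegree ≤ D) :
    (p ^ 2).coeff (2 * D) = (p.coeff D) ^ 2 := by
  rcases eq_or_lt_of_le hp with he | hl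
  · rw [pow_two, pow_two, two_mul, ← he, Polynomial.coeff_mul_degree_add_degree]
    rfl
  · have h1 : (p ^ 2).natDegree < 2 * D := by
      calc (p ^ 2).natDegree ≤ 2 * p.natDegree := Polynomial.natDegree_pow_le
      _ < 2 * D := by omega
    rw [Polynomial.coeff_eq_zero_of_natDegree_lt h1,
      Polynomial.coeff_eq_zero_of_natDegree_lt hl]
    ring

theorem CL_uni {k : ℕ} (p : Fin k → Polynomial ℝ) (a : ℝ)
    (h : ∑ i, p i ^ 2 = Polynomial.C a * Polynomial.X ^ 4) :
    ∀ i, ∀ d, d ≠ 2 → (p i).coeff d = 0 := by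
  have hco : ∀ n : ℕ, (∑ i, p i ^ 2).coeff n = ∑ i, ((p i) ^ 2).coeff n := by
    intro n; rw [Polynomial.finset_sum_coeff]
  have hrhs : ∀ n : ℕ, n ≠ 4 → (∑ i, p i ^ 2).coeff n = 0 := by
    intro n hn
    rw [h, Polynomial.coeff_C_mul, Polynomial.coeff_X_pow, if_neg hn, mul_zero]
  -- constant coefficients vanish
  have h0 : ∀ i, (p i).coeff 0 = 0 := by
    apply CL_sum_sq_zero
    have := hrhs 0 (by norm_num)
    rw [hco] at this
    rw [← this]
    exact Finset.sum_congr rfl fun i _ => by rw [pow_two, pow_two, Polynomial.mul_coeff_zero]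
  -- degree bound
  have hdeg : ∀ i, (p i).natDegree ≤ 2 := by
    by_contra h'
    push_neg at h'
    obtain ⟨i0, hi0⟩ := h'
    obtain ⟨j, _, hj⟩ := Finset.exists_mem_eq_sup Finset.univ
      ⟨i0, Finset.mem_univ i0⟩ (fun i => (p i).natDegree)
    have hD3 : 3 ≤ (p j).natDegree := by
      have h4 := Finset.le_sup (f := fun i => (p i).natDegree) (Finset.mem_univ i0)
      rw [← hj]
      omega
    have hle : ∀ i, (p i).natDegree ≤ (p j).natDegree := fun i => by
      rw [← hj]
      exact Finset.le_sup (f := fun i => (p i).natDegree) (Finset.mem_univ i)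
    have htop : ∀ i, (p i).coeff ((p j).natDegree) = 0 := by
      apply CL_sum_sq_zero
      have h2 := hrhs (2 * (p j).natDegree) (by omega)
      rw [hco] at h2
      rw [← h2]
      exact Finset.sum_congr rfl fun i _ => (CL_sq_coeff_top (p i) _ (hle i)).symm
    have hpj : p j ≠ 0 := by
      intro hz
      rw [hz] at hD3
      simp at hD3
    exact Polynomial.leadingCoeff_ne_zero.mpr hpj (htop j)
  -- linear coefficients vanish
  have h1 : ∀ i, (p i).coeff 1 = 0 := by
    apply CL_sum_sq_zero
    have := hrhs 2 (by norm_num)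
    rw [hco] at this
    rw [← this]
    refine Finset.sum_congr rfl fun i _ => ?_
    rw [pow_two, pow_two, Polynomial.coeff_mul, Finset.Nat.sum_antidiagonal_eq_sum_range_succ_mk]
    rw [Finset.sum_range_succ, Finset.sum_range_succ, Finset.sum_range_one]
    simp [h0 i, pow_two]
  intro i d hd
  match d with
  | 0 => exact h0 i
  | 1 => exact h1 i
  | 2 => exact absurd rfl hd
  | (n+3) => exact Polynomial.coeff_eq_zero_of_natDegree_lt (by have := hdeg i; omega)

end Aux

/-- The Choi–Lam form `Q₁` is nonnegative on `ℝ⁴` but not a sum of squares. -/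
theorem choiLam1_nonneg_not_sos :
    (∀ v : Fin 4 → ℝ, 0 ≤ eval v ChoiLamQ1) ∧
    ¬ ∃ (k : ℕ) (g : Fin k → MvPolynomial (Fin 4) ℝ), ChoiLamQ1 = ∑ i, (g i) ^ 2 := by
  have evalQ : ∀ v : Fin 4 → ℝ, eval v ChoiLamQ1 =
      (v 0)^2*(v 1)^2 + (v 0)^2*(v 2)^2 + (v 1)^2*(v 2)^2 + (v 3)^4
        - 4*((v 3)*(v 0)*(v 1)*(v 2)) := by
    intro v; simp [ChoiLamQ1]
  constructor
  · intro v
    rw [evalQ v]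
    exact CL_key (v 0) (v 1) (v 2) (v 3)
  · rintro ⟨k, g, h⟩
    -- every gᵢ is homogeneous of degree 2
    have hline : ∀ c : Fin 4 → ℝ,
        ∑ i, (CL_lineMap c (g i)) ^ 2
          = Polynomial.C (eval c ChoiLamQ1) * Polynomial.X ^ 4 := by
      intro c
      have h1 : CL_lineMap c ChoiLamQ1 = ∑ i, (CL_lineMap c (g i)) ^ 2 := by
        rw [h, map_sum]; exact Finset.sum_congr rfl fun i _ => map_pow _ _ _
      rw [← h1, evalQ c]
      simp only [ChoiLamQ1, CL_lineMap, map_add, map_sub, map_mul, map_pow,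
        coe_eval₂Hom, eval₂_X, map_ofNat]
      ring
    have hhom : ∀ i, ∀ m : Fin 4 →₀ ℕ, m.degree ≠ 2 → coeff m (g i) = 0 := by
      intro i m hm
      have hcomp : homogeneousComponent m.degree (g i) = 0 := by
        apply MvPolynomial.funext
        intro c
        rw [map_zero, ← CL_lineMap_coeff]
        exact CL_uni (fun i => CL_lineMap c (g i)) (eval c ChoiLamQ1) (hline c) i m.degree hm
      have := coeff_homogeneousComponent (σ := Fin 4) (R := ℝ) m.degree (g i) m
      rw [hcomp, if_pos rfl] at this
      simpa using this.symm
    -- explicit quadratic-form evaluation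
    set A := fun i => coeff (Finsupp.single 0 1 + Finsupp.single 1 1) (g i) with hA
    set B := fun i => coeff (Finsupp.single 0 1 + Finsupp.single 2 1) (g i) with hB
    set Cc := fun i => coeff (Finsupp.single 1 1 + Finsupp.single 2 1) (g i) with hCc
    set D := fun i => coeff (Finsupp.single (3 : Fin 4) 2) (g i) with hD
    set E := fun i => coeff (Finsupp.single 0 1 + Finsupp.single 3 1) (g i) with hE
    set F := fun i => coeff (Finsupp.single 1 1 + Finsupp.single 3 1) (g i) with hF
    set H := fun i => coeff (Finsupp.single 2 1 + Finsupp.single 3 1) (g i) with hH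
    set P := fun i => coeff (Finsupp.single (0 : Fin 4) 2) (g i) with hP
    set Qc := fun i => coeff (Finsupp.single (1 : Fin 4) 2) (g i) with hQc
    set R := fun i => coeff (Finsupp.single (2 : Fin 4) 2) (g i) with hR
    have hEval : ∀ i, ∀ v : Fin 4 → ℝ, eval v (g i) =
        P i * (v 0)^2 + Qc i * (v 1)^2 + R i * (v 2)^2 + D i * (v 3)^2
        + A i * (v 0 * v 1) + B i * (v 0 * v 2) + Cc i * (v 1 * v 2)
        + E i * (v 0 * v 3) + F i * (v 1 * v 3) + H i * (v 2 * v 3) := by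
      intro i v
      conv_lhs => rw [CL_rep (g i) (hhom i)]
      simp only [map_add, eval_monomial, Finsupp.prod_add_index' (h := fun j k => (v j)^k)
        (fun j => pow_zero (v j)) (fun j k l => pow_add (v j) k l)]
      simp [Finsupp.prod_single_index]
      try ring
    have hQeval : ∀ v : Fin 4 → ℝ, eval v ChoiLamQ1 = ∑ i, (eval v (g i))^2 := by
      intro v
      rw [h, map_sum]
      exact Finset.sum_congr rfl fun i _ => map_pow _ _ _
    -- points where the form vanishes kill the evaluations of every gᵢ
    have hzero : ∀ s : Fin 4 → ℝ, eval s ChoiLamQ1 = 0 → ∀ i, eval s (g i) = 0 := by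
      intro s hs
      apply CL_sum_sq_zero
      rw [← hQeval s, hs]
    have z1 := hzero ![1,0,0,0] (by rw [evalQ]; norm_num [Matrix.cons_val_two, Matrix.cons_val_three])
    have z2 := hzero ![0,1,0,0] (by rw [evalQ]; norm_num [Matrix.cons_val_two, Matrix.cons_val_three])
    have z3 := hzero ![0,0,1,0] (by rw [evalQ]; norm_num [Matrix.cons_val_two, Matrix.cons_val_three])
    have e1 := hzero ![1,1,1,1] (by rw [evalQ]; norm_num [Matrix.cons_val_two, Matrix.cons_val_three])
    have e2 := hzero ![1,1,-1,-1] (by rw [evalQ]; norm_num [Matrix.cons_val_two, Matrix.cons_val_three])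
    have e3 := hzero ![1,-1,1,-1] (by rw [evalQ]; norm_num [Matrix.cons_val_two, Matrix.cons_val_three])
    have e4 := hzero ![1,-1,-1,1] (by rw [evalQ]; norm_num [Matrix.cons_val_two, Matrix.cons_val_three])
    have hDz : ∀ i, D i = 0 := by
      intro i
      have a1 := z1 i; have a2 := z2 i; have a3 := z3 i
      have b1 := e1 i; have b2 := e2 i; have b3 := e3 i; have b4 := e4 i
      rw [hEval i] at a1 a2 a3 b1 b2 b3 b4
      norm_num [Matrix.cons_val_zero, Matrix.cons_val_one, Matrix.head_cons, Matrix.cons_val_two, Matrix.cons_val_three] at a1 a2 a3 b1 b2 b3 b4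
      linarith
    have hv := hQeval ![0,0,0,1]
    rw [evalQ] at hv
    have hz : ∀ i ∈ Finset.univ, (eval ![0,0,0,1] (g i))^2 = 0 := by
      intro i _
      rw [hEval i]
      norm_num [Matrix.cons_val_zero, Matrix.cons_val_one, Matrix.head_cons, hDz i, Matrix.cons_val_two, Matrix.cons_val_three]
    rw [Finset.sum_eq_zero hz] at hv
    norm_num [Matrix.cons_val_three] at hv
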